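/- Let m, n, p be positive integers with m ≥ p and n ≥ p, and let α ∈ (0,1) and β > 0 be reals. Then there exist reals f₁ > f₂ > ⋯ > f_p > 0 such that, with g_i = 1/(1+β·f_i) and d_i = n−p+2i−1, (1/n)·∑_{i=1}^{p} [ −d_i·α·g_i − 2·α·β·f_i·g_i² − 2·α·β·∑_{j=i+1}^{p} f_j·g_i·g_j − n·log(1 − α·g_i) ] > 0. (Indeed, as all f_i → 0⁺ this quantity tends to p·[(1−α) − log(1−α) − 1], which is strictly positive.) -/

import Mathlib

set_option maxHeartbeats 1600000

/-- Proposition 4.1 (deterministic content): for `m ≥ p`, `n ≥ p`, `α ∈ (0,1)` and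
`β > 0`, there exists an eigenvalue configuration `f₁ > ⋯ > f_p > 0` at which the
unbiased estimate of the Stein-loss risk difference of the estimator `Σ̂^{G2}` is
strictly positive. -/
theorem stmt_14 (m n p : ℕ) (hp : 0 < p) (hmp : m ≥ p) (hn : n ≥ p)
    (α β : ℝ) (hα0 : 0 < α) (hα1 : α < 1) (hβ : 0 < β) :
    ∃ f : Fin p → ℝ, (∀ i j : Fin p, i < j → f j < f i) ∧ (∀ i, 0 < f i) ∧
      (1 / (n : ℝ)) * ∑ i : Fin p,
          (-(((n : ℝ) - p + 2 * ((i : ℕ) + 1) - 1)) * α * (1 / (1 + β * f i))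
            - 2 * α * β * f i * (1 / (1 + β * f i)) ^ 2
            - 2 * α * β * ∑ j ∈ Finset.univ.filter (fun j => i < j),
                f j * (1 / (1 + β * f i)) * (1 / (1 + β * f j))
            - n * Real.log (1 - α * (1 / (1 + β * f i)))) > 0 := by
  have hnp : 0 < n := lt_of_lt_of_le hp hn
  have hnR : (0:ℝ) < n := by exact_mod_cast hnp
  have hpR : (0:ℝ) < p := by exact_mod_cast hp
  have hpn : (p:ℝ) ≤ n := by exact_mod_cast hn
  have h1α : (0:ℝ) < 1 - α := by linarith
  have hlog : Real.log (1 - α) < -α := by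
    have := Real.log_lt_sub_one_of_pos h1α (by intro h; simp at h; linarith)
    linarith
  -- constants
  set L : ℝ := (n:ℝ) * p * (-α - Real.log (1 - α)) with hLdef
  have hL : 0 < L := by
    apply mul_pos (mul_pos hnR hpR); linarith
  set K : ℝ := (p:ℝ) * (2*α*β + 2*α*β*p + (n:ℝ)*α*β/(1-α)) with hKdef
  have hK : 0 < K := by
    apply mul_pos hpR
    have h1 : (0:ℝ) ≤ (n:ℝ)*α*β/(1-α) := by
      apply div_nonneg (by positivity) (le_of_lt h1α)
    nlinarith [mul_pos (mul_pos hα0 hβ) hpR, mul_pos hα0 hβ]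
  set ε : ℝ := L / (2*K) with hεdef
  have hε : 0 < ε := by positivity
  have hεK : ε * K = L / 2 := by
    rw [hεdef]; field_simp
  clear_value ε L K
  clear hεdef
  set f : Fin p → ℝ := fun i => ε * ((p:ℝ) - (i:ℕ)) / p with hfdef
  have hfpos : ∀ i : Fin p, 0 < f i := by
    intro i
    have : ((i:ℕ):ℝ) < p := by exact_mod_cast i.isLt
    have : 0 < (p:ℝ) - (i:ℕ) := by linarith
    positivity
  have hfle : ∀ i : Fin p, f i ≤ ε := by
    intro i
    have h0 : (0:ℝ) ≤ ((i:ℕ):ℝ) := Nat.cast_nonneg _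
    rw [hfdef]
    rw [div_le_iff₀ hpR]
    nlinarith
  refine ⟨f, ?_, hfpos, ?_⟩
  · intro i j hij
    have hij' : ((i:ℕ):ℝ) < ((j:ℕ):ℝ) := by exact_mod_cast hij
    rw [hfdef]
    simp only
    rw [div_lt_div_iff₀ hpR hpR]
    nlinarith [mul_pos hε hpR, mul_pos hpR hpR]
  · -- main inequality
    clear_value f
    clear hfdef
    -- per-index facts
    have hb : ∀ i : Fin p, (0:ℝ) < 1 + β * f i := fun i => by
      have := hfpos i; nlinarith
    have hg_pos : ∀ i : Fin p, (0:ℝ) < 1 / (1 + β * f i) := fun i => by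
      have := hb i; positivity
    have hg_le1 : ∀ i : Fin p, 1 / (1 + β * f i) ≤ 1 := fun i => by
      have h1 := hb i
      have h2 : (1:ℝ) ≤ 1 + β * f i := by nlinarith [hfpos i]
      rw [div_le_one h1]; linarith
    have hg_lb : ∀ i : Fin p, 1 - 1 / (1 + β * f i) ≤ β * ε := fun i => by
      have h1 := hb i
      have h2 : 1 - 1 / (1 + β * f i) = (β * f i) / (1 + β * f i) := by
        field_simp
        ring
      rw [h2, div_le_iff₀ h1]
      nlinarith [hfpos i, hfle i, mul_pos hβ hε, mul_pos (mul_pos hβ hε) (mul_pos hβ (hfpos i))]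
    -- the constant lower bound for each term
    set C : ℝ := 2*α*β*ε + 2*α*β*(p:ℝ)*ε + (n:ℝ)*Real.log (1-α) + (n:ℝ)*α*β*ε/(1-α) with hCdef
    clear_value C
    have hterm : ∀ i ∈ (Finset.univ : Finset (Fin p)),
        -(((n : ℝ) - p + 2 * ((i : ℕ) + 1) - 1)) * α - C ≤
        (-(((n : ℝ) - p + 2 * ((i : ℕ) + 1) - 1)) * α * (1 / (1 + β * f i))
            - 2 * α * β * f i * (1 / (1 + β * f i)) ^ 2
            - 2 * α * β * ∑ j ∈ Finset.univ.filter (fun j => i < j),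
                f j * (1 / (1 + β * f i)) * (1 / (1 + β * f j))
            - n * Real.log (1 - α * (1 / (1 + β * f i)))) := by
      intro i _
      set g : ℝ := 1 / (1 + β * f i) with hgdef
      have hgp := hg_pos i
      have hg1 := hg_le1 i
      have hglb := hg_lb i
      rw [← hgdef] at hgp hg1 hglb
      clear_value g
      have hd : 0 < ((n : ℝ) - p + 2 * ((i : ℕ) + 1) - 1) := by
        have h0 : (0:ℝ) ≤ ((i:ℕ):ℝ) := Nat.cast_nonneg _
        linarith
      -- (a)
      have ha : -(((n : ℝ) - p + 2 * ((i : ℕ) + 1) - 1)) * α ≤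
          -(((n : ℝ) - p + 2 * ((i : ℕ) + 1) - 1)) * α * g := by
        nlinarith [mul_nonneg (mul_pos hd hα0).le (by linarith : (0:ℝ) ≤ 1 - g)]
      -- (b)
      have hb2 : 2 * α * β * f i * g ^ 2 ≤ 2*α*β*ε := by
        have hg2 : g ^ 2 ≤ 1 := by nlinarith
        have h1 : f i * g ^ 2 ≤ ε := by
          nlinarith [mul_nonneg (hfpos i).le (sub_nonneg.mpr hg2), hfle i]
        have h2 := mul_le_mul_of_nonneg_left h1 (show (0:ℝ) ≤ 2*α*β by positivity)
        linarith [h2]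
      -- (c)
      have hc : (∑ j ∈ Finset.univ.filter (fun j => i < j),
            f j * g * (1 / (1 + β * f j))) ≤ (p:ℝ) * ε := by
        have h1 : ∀ j ∈ Finset.univ.filter (fun j => i < j),
            f j * g * (1 / (1 + β * f j)) ≤ ε := by
          intro j _
          have hjp := hg_pos j
          have hj1 := hg_le1 j
          have e1 : f j * g ≤ ε := by
            nlinarith [mul_nonneg (hfpos j).le (by linarith : (0:ℝ) ≤ 1 - g), hfle j]
          have e0 : 0 ≤ f j * g := mul_nonneg (hfpos j).le hgp.le
          nlinarith [mul_nonneg e0 (by linarith : (0:ℝ) ≤ 1 - 1 / (1 + β * f j))]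
        calc (∑ j ∈ Finset.univ.filter (fun j => i < j),
              f j * g * (1 / (1 + β * f j)))
            ≤ (Finset.univ.filter (fun j : Fin p => i < j)).card • ε :=
              Finset.sum_le_card_nsmul _ _ _ h1
          _ = ((Finset.univ.filter (fun j : Fin p => i < j)).card : ℝ) * ε := by
              rw [nsmul_eq_mul]
          _ ≤ (p:ℝ) * ε := by
              apply mul_le_mul_of_nonneg_right _ (le_of_lt hε)
              have h2 : (Finset.univ.filter (fun j : Fin p => i < j)).card ≤ p := by
                calc (Finset.univ.filter (fun j : Fin p => i < j)).card
                    ≤ (Finset.univ : Finset (Fin p)).card := Finset.card_filter_le _ _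
                  _ = p := by simp
              exact_mod_cast h2
      have hc' : 2 * α * β * ∑ j ∈ Finset.univ.filter (fun j => i < j),
            f j * g * (1 / (1 + β * f j)) ≤ 2*α*β*((p:ℝ)*ε) := by
        apply mul_le_mul_of_nonneg_left hc (by positivity)
      -- (d)
      have hd1 : 0 < 1 - α * g := by nlinarith
      have hd2 : Real.log (1 - α * g) ≤ Real.log (1-α) + α*β*ε/(1-α) := by
        have h1 : Real.log (1 - α * g) - Real.log (1-α)
            = Real.log ((1 - α*g)/(1-α)) :=
          (Real.log_div (ne_of_gt hd1) (ne_of_gt h1α)).symm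
        have h2 : Real.log ((1 - α*g)/(1-α)) ≤ (1 - α*g)/(1-α) - 1 :=
          Real.log_le_sub_one_of_pos (by positivity)
        have h3 : (1 - α*g)/(1-α) - 1 = α*(1-g)/(1-α) := by
          field_simp
          ring
        have h4 : α*(1-g)/(1-α) ≤ α*β*ε/(1-α) := by
          rw [div_le_div_iff₀ h1α h1α]
          nlinarith [mul_nonneg (mul_pos hα0 h1α).le
            (by linarith : (0:ℝ) ≤ β*ε - (1-g))]
        linarith
      have hd3 : (n:ℝ) * Real.log (1 - α * g) ≤
          (n:ℝ)*Real.log (1-α) + (n:ℝ)*α*β*ε/(1-α) := by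
        have := mul_le_mul_of_nonneg_left hd2 (le_of_lt hnR)
        have heq : (n:ℝ) * (Real.log (1-α) + α*β*ε/(1-α))
            = (n:ℝ)*Real.log (1-α) + (n:ℝ)*α*β*ε/(1-α) := by ring
        linarith [heq ▸ this]
      rw [hCdef]
      linarith
    -- sum of d_i equals n*p
    have hgauss : ∀ q : ℕ, ∑ i ∈ Finset.range q, ((i:ℝ)+1) = q*(q+1)/2 := by
      intro q
      induction q with
      | zero => simp
      | succ k ih => rw [Finset.sum_range_succ, ih]; push_cast; ring
    have hsumd : ∑ i : Fin p, ((n : ℝ) - p + 2 * ((i : ℕ) + 1) - 1) = (n:ℝ)*p := by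
      rw [Fin.sum_univ_eq_sum_range (fun i => ((n : ℝ) - p + 2 * ((i:ℕ) + 1) - 1))]
      have h1 : ∑ i ∈ Finset.range p, ((n : ℝ) - p + 2 * ((i:ℕ) + 1) - 1)
          = ∑ i ∈ Finset.range p, (((n:ℝ) - p - 1) + 2 * (((i:ℕ):ℝ) + 1)) :=
        Finset.sum_congr rfl (fun i _ => by push_cast; ring)
      rw [h1, Finset.sum_add_distrib, Finset.sum_const, Finset.card_range,
        ← Finset.mul_sum, hgauss p, nsmul_eq_mul]
      field_simp
      ring
    -- combine
    have hsum : L - ε * K ≤ ∑ i : Fin p,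
          (-(((n : ℝ) - p + 2 * ((i : ℕ) + 1) - 1)) * α * (1 / (1 + β * f i))
            - 2 * α * β * f i * (1 / (1 + β * f i)) ^ 2
            - 2 * α * β * ∑ j ∈ Finset.univ.filter (fun j => i < j),
                f j * (1 / (1 + β * f i)) * (1 / (1 + β * f j))
            - n * Real.log (1 - α * (1 / (1 + β * f i)))) := by
      have h1 := Finset.sum_le_sum hterm
      have h2 : ∑ i : Fin p, (-(((n : ℝ) - p + 2 * ((i : ℕ) + 1) - 1)) * α - C)
          = -((n:ℝ)*p)*α - (p:ℝ)*C := by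
        rw [Finset.sum_sub_distrib, Finset.sum_const, Finset.card_univ,
          Fintype.card_fin, nsmul_eq_mul]
        have h3 : ∑ i : Fin p, (-(((n : ℝ) - p + 2 * ((i : ℕ) + 1) - 1)) * α)
            = -((n:ℝ)*p) * α := by
          simp only [neg_mul]
          rw [Finset.sum_neg_distrib, ← Finset.sum_mul, hsumd]
        rw [h3]
      have h4 : -((n:ℝ)*p)*α - (p:ℝ)*C = L - ε * K := by
        rw [hCdef, hLdef, hKdef]
        field_simp
        ring
      linarith [h4 ▸ h2 ▸ h1]
    have hSpos : 0 < ∑ i : Fin p,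
          (-(((n : ℝ) - p + 2 * ((i : ℕ) + 1) - 1)) * α * (1 / (1 + β * f i))
            - 2 * α * β * f i * (1 / (1 + β * f i)) ^ 2
            - 2 * α * β * ∑ j ∈ Finset.univ.filter (fun j => i < j),
                f j * (1 / (1 + β * f i)) * (1 / (1 + β * f j))
            - n * Real.log (1 - α * (1 / (1 + β * f i)))) := by
      have : 0 < L - ε * K := by rw [hεK]; linarith
      linarith
    exact mul_pos (by positivity) hSpos
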